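/- Let N ≥ 1 and p ∈ [0, 1]. For each bitstring k ∈ {0,1}^N define the dephasing Kraus operator S_k := p^{(N − h(k))/2} (1 − p)^{h(k)/2} · ⊗_{i=1}^N σz^{k_i} on (ℂ²)^{⊗N}, where h(k) is the Hamming weight of k, σz^0 = I and σz^1 = σz. Let S_x := Σ_{i=1}^N σx^{(i)} and S_z := Σ_{i=1}^N σz^{(i)}. Then Σ_{l, k ∈ {0,1}^N} S_l · ⟨l| S_x² |k⟩ · S_k = N (1 − 4p(1−p)) · I + 4p(1−p) · S_z², where ⟨l| S_x² |k⟩ denotes the matrix element of S_x² between the computational basis vectors |l⟩ and |k⟩. -/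

import Mathlib

open Matrix

/-- The Pauli matrices `σx` and `σz`. -/
def pauliX : Matrix (Fin 2) (Fin 2) ℂ := !![0, 1; 1, 0]
def pauliZ : Matrix (Fin 2) (Fin 2) ℂ := !![1, 0; 0, -1]

/-- `σ_A^{(i)}` : the one-qubit operator `A` acting on the `i`-th tensor factor of
`(ℂ²)^{⊗N}` and the identity elsewhere, written as a matrix indexed by bitstrings. -/
def pauliAt (N : ℕ) (i : ℕ) (A : Matrix (Fin 2) (Fin 2) ℂ) :
    Matrix (Fin N → Fin 2) (Fin N → Fin 2) ℂ :=
  Matrix.of fun x y =>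
    ∏ j : Fin N, if (j : ℕ) = i then A (x j) (y j) else (if x j = y j then 1 else 0)

/-- The `N`-fold tensor product `A_1 ⊗ … ⊗ A_N` of one-qubit operators, as a matrix
indexed by bitstrings. -/
def kronN (N : ℕ) (A : Fin N → Matrix (Fin 2) (Fin 2) ℂ) :
    Matrix (Fin N → Fin 2) (Fin N → Fin 2) ℂ :=
  Matrix.of fun x y => ∏ i : Fin N, A i (x i) (y i)

/-- The Hamming weight of a bitstring. -/
def hamWt (N : ℕ) (k : Fin N → Fin 2) : ℕ := ∑ i : Fin N, (k i : ℕ)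

/-- The dephasing Kraus operator
`S_k = p^{(N-h(k))/2} (1-p)^{h(k)/2} ⊗_{i=1}^N σz^{k_i}`. -/
noncomputable def krausOp (N : ℕ) (p : ℝ) (k : Fin N → Fin 2) :
    Matrix (Fin N → Fin 2) (Fin N → Fin 2) ℂ :=
  ((Real.sqrt (p ^ (N - hamWt N k)) * Real.sqrt ((1 - p) ^ hamWt N k) : ℝ) : ℂ) •
    kronN N (fun i => if k i = 1 then pauliZ else 1)

/-! ### Auxiliary lemmas -/

lemma prod_delta {N : ℕ} (x y : Fin N → Fin 2) :
    (∏ m : Fin N, if x m = y m then (1:ℂ) else 0) = if x = y then 1 else 0 := by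
  split_ifs with h
  · subst h; simp
  · obtain ⟨m, hm⟩ := Function.ne_iff.mp h
    exact Finset.prod_eq_zero (Finset.mem_univ m) (by simp [hm])

lemma kronN_mul {N : ℕ} (A B : Fin N → Matrix (Fin 2) (Fin 2) ℂ) :
    kronN N A * kronN N B = kronN N (fun m => A m * B m) := by
  ext x y
  simp only [kronN, Matrix.mul_apply, Matrix.of_apply, ← Finset.prod_mul_distrib]
  exact (Fintype.prod_sum (fun m z => A m (x m) z * B m z (y m))).symm

lemma kronN_one {N : ℕ} : kronN N (fun _ => (1 : Matrix (Fin 2) (Fin 2) ℂ)) = 1 := by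
  ext x y
  simp only [kronN, Matrix.of_apply, Matrix.one_apply]
  exact prod_delta x y

def site {N : ℕ} (i : ℕ) (A : Matrix (Fin 2) (Fin 2) ℂ) : Fin N → Matrix (Fin 2) (Fin 2) ℂ :=
  fun m => if (m : ℕ) = i then A else 1

lemma pauliAt_eq {N : ℕ} (i : ℕ) (A : Matrix (Fin 2) (Fin 2) ℂ) :
    pauliAt N i A = kronN N (site i A) := by
  ext x y
  simp only [pauliAt, kronN, Matrix.of_apply, site]
  refine Finset.prod_congr rfl fun m _ => ?_
  split_ifs <;> simp [Matrix.one_apply, *]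

lemma X_mul_X : pauliX * pauliX = 1 := by
  ext a b; fin_cases a <;> fin_cases b <;>
    simp [pauliX, Matrix.mul_apply, Fin.sum_univ_two, Matrix.one_apply]

lemma Z_mul_Z : pauliZ * pauliZ = 1 := by
  ext a b; fin_cases a <;> fin_cases b <;>
    simp [pauliZ, Matrix.mul_apply, Fin.sum_univ_two, Matrix.one_apply]

noncomputable def wq (p : ℝ) : Fin 2 → ℂ := fun x => if x = 1 then ((Real.sqrt (1-p) : ℝ) : ℂ) else ((Real.sqrt p : ℝ) : ℂ)

def zsite (x : Fin 2) : Matrix (Fin 2) (Fin 2) ℂ := if x = 1 then pauliZ else 1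

lemma sqrt_pow' {x : ℝ} (hx : 0 ≤ x) (n : ℕ) : Real.sqrt (x ^ n) = Real.sqrt x ^ n := by
  induction n with
  | zero => simp
  | succ n ih => rw [pow_succ, pow_succ, Real.sqrt_mul (by positivity), ih]

lemma hamWt_card {N : ℕ} (l : Fin N → Fin 2) :
    hamWt N l = (Finset.univ.filter (fun m => l m = 1)).card := by
  rw [hamWt, Finset.card_filter]
  refine Finset.sum_congr rfl fun m _ => ?_
  have : ∀ x : Fin 2, (x : ℕ) = if x = 1 then 1 else 0 := by decide
  exact this (l m)

lemma hamWt_le {N : ℕ} (l : Fin N → Fin 2) : hamWt N l ≤ N := by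
  rw [hamWt_card]
  simpa using Finset.card_filter_le (Finset.univ : Finset (Fin N)) (fun m => l m = 1)

lemma coeff_eq {N : ℕ} (p : ℝ) (hp0 : 0 ≤ p) (hp1 : p ≤ 1) (l : Fin N → Fin 2) :
    ((Real.sqrt (p ^ (N - hamWt N l)) * Real.sqrt ((1 - p) ^ hamWt N l) : ℝ) : ℂ) =
      ∏ m : Fin N, wq p (l m) := by
  have h1 : (0:ℝ) ≤ 1 - p := by linarith
  rw [sqrt_pow' hp0, sqrt_pow' h1]
  have hstep : ∀ m : Fin N, wq p (l m) =
      ((Real.sqrt (1-p) : ℝ) : ℂ) ^ (l m : ℕ) * ((Real.sqrt p : ℝ) : ℂ) ^ (1 - (l m : ℕ)) := by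
    intro m
    have h : l m = 0 ∨ l m = 1 := by omega
    rcases h with h | h <;> rw [h] <;> simp [wq]
  rw [Finset.prod_congr rfl (fun m _ => hstep m), Finset.prod_mul_distrib,
    Finset.prod_pow_eq_pow_sum, Finset.prod_pow_eq_pow_sum]
  have hsum1 : ∑ m : Fin N, (l m : ℕ) = hamWt N l := rfl
  have hsum2 : ∑ m : Fin N, (1 - (l m : ℕ)) = N - hamWt N l := by
    rw [hamWt]
    have h1' : ∀ m : Fin N, (1 - (l m : ℕ)) + (l m : ℕ) = 1 := fun m => by omega
    have h2' : ∑ m : Fin N, ((1 - (l m : ℕ)) + (l m : ℕ)) = N := by simp [h1']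
    rw [Finset.sum_add_distrib] at h2'
    omega
  rw [hsum1, hsum2]
  push_cast
  ring

lemma krausOp_eq {N : ℕ} (p : ℝ) (hp0 : 0 ≤ p) (hp1 : p ≤ 1) (l : Fin N → Fin 2) :
    krausOp N p l = (∏ m : Fin N, wq p (l m)) • kronN N (fun m => zsite (l m)) := by
  rw [krausOp, coeff_eq p hp0 hp1 l]; rfl

lemma sA (p : ℝ) (hp0 : 0 ≤ p) (hp1 : p ≤ 1) (α β : Fin 2) :
    ∑ x : Fin 2, ∑ y : Fin 2,
        (1 : Matrix (Fin 2) (Fin 2) ℂ) x y * (wq p x * wq p y * (zsite x * zsite y) α β)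
      = if α = β then 1 else 0 := by
  have h1 : (0:ℝ) ≤ 1 - p := by linarith
  have hpp : ((Real.sqrt p : ℝ) : ℂ) * ((Real.sqrt p : ℝ) : ℂ) = (p : ℂ) := by
    rw [← Complex.ofReal_mul, Real.mul_self_sqrt hp0]
  have hqq : ((Real.sqrt (1-p) : ℝ) : ℂ) * ((Real.sqrt (1-p) : ℝ) : ℂ) = ((1-p : ℝ) : ℂ) := by
    rw [← Complex.ofReal_mul, Real.mul_self_sqrt h1]
  fin_cases α <;> fin_cases β <;>
    simp [Fin.sum_univ_two, wq, zsite, Z_mul_Z, pauliZ, Matrix.one_apply, Matrix.mul_apply] <;>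
    rw [show ((1:ℂ)) = (p:ℂ) + ((1-p:ℝ):ℂ) by push_cast; ring] <;>
    rw [← hpp, ← hqq] <;> ring

lemma sB (p : ℝ) (hp0 : 0 ≤ p) (hp1 : p ≤ 1) (α β : Fin 2) :
    ∑ x : Fin 2, ∑ y : Fin 2,
        pauliX x y * (wq p x * wq p y * (zsite x * zsite y) α β)
      = ((2 * (Real.sqrt p * Real.sqrt (1-p)) : ℝ) : ℂ) * pauliZ α β := by
  fin_cases α <;> fin_cases β <;>
    simp [Fin.sum_univ_two, wq, zsite, pauliX, pauliZ, Matrix.one_apply, Matrix.mul_apply] <;>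
    push_cast <;> ring

lemma key {N : ℕ} (p : ℝ) (hp0 : 0 ≤ p) (hp1 : p ≤ 1) (i j : Fin N) :
    ∑ l : Fin N → Fin 2, ∑ k : Fin N → Fin 2,
      ((pauliAt N i.1 pauliX * pauliAt N j.1 pauliX) l k) • (krausOp N p l * krausOp N p k) =
    if i = j then (1 : Matrix (Fin N → Fin 2) (Fin N → Fin 2) ℂ)
    else ((4 * p * (1 - p) : ℝ) : ℂ) • (pauliAt N i.1 pauliZ * pauliAt N j.1 pauliZ) := by
  ext a b
  -- notation
  set M : Fin N → Matrix (Fin 2) (Fin 2) ℂ :=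
    fun m => site (N := N) i.1 pauliX m * site (N := N) j.1 pauliX m with hM
  have hXX : pauliAt N i.1 pauliX * pauliAt N j.1 pauliX = kronN N M := by
    rw [pauliAt_eq, pauliAt_eq, kronN_mul]
  have hK : ∀ l k : Fin N → Fin 2, krausOp N p l * krausOp N p k =
      ((∏ m : Fin N, wq p (l m)) * (∏ m : Fin N, wq p (k m))) •
        kronN N (fun m => zsite (l m) * zsite (k m)) := by
    intro l k
    rw [krausOp_eq p hp0 hp1, krausOp_eq p hp0 hp1, smul_mul_smul_comm, kronN_mul]
  -- the per-site summand
  set F : Fin N → Fin 2 → Fin 2 → ℂ :=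
    fun m x y => M m x y * (wq p x * wq p y * (zsite x * zsite y) (a m) (b m)) with hF
  have hterm : ∀ l k : Fin N → Fin 2,
      ((pauliAt N i.1 pauliX * pauliAt N j.1 pauliX) l k) • ((krausOp N p l * krausOp N p k) a b)
        = ∏ m : Fin N, F m (l m) (k m) := by
    intro l k
    rw [hXX, hK, Matrix.smul_apply, smul_eq_mul, smul_eq_mul]
    show (∏ m : Fin N, M m (l m) (k m)) *
      ((∏ m : Fin N, wq p (l m)) * (∏ m : Fin N, wq p (k m)) *
        ∏ m : Fin N, (zsite (l m) * zsite (k m)) (a m) (b m)) = _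
    simp only [← Finset.prod_mul_distrib]
    rfl
  have hLHS : (∑ l : Fin N → Fin 2, ∑ k : Fin N → Fin 2,
      ((pauliAt N i.1 pauliX * pauliAt N j.1 pauliX) l k) • (krausOp N p l * krausOp N p k)) a b
      = ∏ m : Fin N, ∑ x : Fin 2, ∑ y : Fin 2, F m x y := by
    simp only [Matrix.sum_apply, Matrix.smul_apply]
    calc ∑ l : Fin N → Fin 2, ∑ k : Fin N → Fin 2,
          ((pauliAt N i.1 pauliX * pauliAt N j.1 pauliX) l k) • ((krausOp N p l * krausOp N p k) a b)
        = ∑ l : Fin N → Fin 2, ∑ k : Fin N → Fin 2, ∏ m : Fin N, F m (l m) (k m) := by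
          refine Finset.sum_congr rfl fun l _ => Finset.sum_congr rfl fun k _ => hterm l k
      _ = ∑ l : Fin N → Fin 2, ∏ m : Fin N, ∑ y : Fin 2, F m (l m) y := by
          refine Finset.sum_congr rfl fun l _ => ?_
          exact (Fintype.prod_sum (fun m y => F m (l m) y)).symm
      _ = ∏ m : Fin N, ∑ x : Fin 2, ∑ y : Fin 2, F m x y :=
          (Fintype.prod_sum (fun m x => ∑ y : Fin 2, F m x y)).symm
  rw [hLHS]
  by_cases hij : i = j
  · subst hij
    simp only [if_pos rfl]
    have hM1 : ∀ m : Fin N, M m = 1 := by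
      intro m
      rw [hM]
      by_cases h : (m : ℕ) = i.1
      · simp only [site, if_pos h, X_mul_X]
      · simp only [site, if_neg h, one_mul]
    have : ∀ m : Fin N, (∑ x : Fin 2, ∑ y : Fin 2, F m x y) = if a m = b m then 1 else 0 := by
      intro m
      rw [hF]
      simp only [hM1]
      exact sA p hp0 hp1 (a m) (b m)
    rw [Finset.prod_congr rfl fun m _ => this m, prod_delta]
    simp [Matrix.one_apply]
  · simp only [if_neg hij]
    have hij' : i.1 ≠ j.1 := fun h => hij (Fin.val_injective h)
    set e : ℂ := ((2 * (Real.sqrt p * Real.sqrt (1-p)) : ℝ) : ℂ) with he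
    set u : Fin N → ℂ :=
      fun m => (site (N := N) i.1 pauliZ m * site (N := N) j.1 pauliZ m) (a m) (b m) with hu
    have hsite : ∀ m : Fin N, (∑ x : Fin 2, ∑ y : Fin 2, F m x y)
        = (if (m : ℕ) = i.1 then e else 1) * ((if (m : ℕ) = j.1 then e else 1) * u m) := by
      intro m
      by_cases hi : (m : ℕ) = i.1
      · have hj : ¬ (m : ℕ) = j.1 := by rw [hi]; exact hij'
        have hMm : M m = pauliX := by
          rw [hM]; simp only [site, if_pos hi, if_neg hj, mul_one]
        have hum : u m = pauliZ (a m) (b m) := by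
          rw [hu]; simp only [site, if_pos hi, if_neg hj, mul_one]
        simp only [hF, hMm, hum, if_pos hi, if_neg hj, one_mul]
        rw [sB p hp0 hp1 (a m) (b m)]
      · by_cases hj : (m : ℕ) = j.1
        · have hMm : M m = pauliX := by
            rw [hM]; simp only [site, if_pos hj, if_neg hi, one_mul]
          have hum : u m = pauliZ (a m) (b m) := by
            rw [hu]; simp only [site, if_pos hj, if_neg hi, one_mul]
          simp only [hF, hMm, hum, if_pos hj, if_neg hi, one_mul]
          rw [sB p hp0 hp1 (a m) (b m)]
        · have hMm : M m = 1 := by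
            rw [hM]; simp only [site, if_neg hi, if_neg hj, one_mul]
          have hum : u m = if a m = b m then 1 else 0 := by
            rw [hu]; simp only [site, if_neg hi, if_neg hj, one_mul, Matrix.one_apply]
          simp only [hF, hMm, hum, if_neg hi, if_neg hj, one_mul]
          exact sA p hp0 hp1 (a m) (b m)
    rw [Finset.prod_congr rfl fun m _ => hsite m, Finset.prod_mul_distrib,
      Finset.prod_mul_distrib]
    have hei : (∏ m : Fin N, if (m : ℕ) = i.1 then e else 1) = e := by
      have : ∀ m : Fin N, ((m : ℕ) = i.1) = (m = i) := by
        intro m; ext; exact ⟨fun h => Fin.val_injective h, fun h => by rw [h]⟩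
      simp only [this]
      rw [Finset.prod_ite_eq' Finset.univ i (fun _ => e)]
      simp
    have hej : (∏ m : Fin N, if (m : ℕ) = j.1 then e else 1) = e := by
      have : ∀ m : Fin N, ((m : ℕ) = j.1) = (m = j) := by
        intro m; ext; exact ⟨fun h => Fin.val_injective h, fun h => by rw [h]⟩
      simp only [this]
      rw [Finset.prod_ite_eq' Finset.univ j (fun _ => e)]
      simp
    rw [hei, hej]
    have hZZ : (pauliAt N i.1 pauliZ * pauliAt N j.1 pauliZ) a b = ∏ m : Fin N, u m := by
      rw [pauliAt_eq, pauliAt_eq, kronN_mul]; rfl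
    rw [Matrix.smul_apply, hZZ, smul_eq_mul, ← mul_assoc]
    congr 1
    rw [he]
    push_cast
    rw [show ((4:ℂ) * p * (1 - p)) = (2 * ((Real.sqrt p : ℂ) * (Real.sqrt p)) *
      (2 * ((Real.sqrt (1-p) : ℂ) * (Real.sqrt (1-p))))) from ?_]
    · ring
    · rw [← Complex.ofReal_mul, ← Complex.ofReal_mul (Real.sqrt (1-p)),
        Real.mul_self_sqrt hp0, Real.mul_self_sqrt (by linarith)]
      push_cast; ring

lemma ZZ_self {N : ℕ} (i : Fin N) : pauliAt N i.1 pauliZ * pauliAt N i.1 pauliZ = 1 := by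
  rw [pauliAt_eq, kronN_mul]
  have : (fun m => site (N := N) i.1 pauliZ m * site (N := N) i.1 pauliZ m)
      = fun _ => (1 : Matrix (Fin 2) (Fin 2) ℂ) := by
    funext m
    by_cases h : (m : ℕ) = i.1 <;> simp [site, h, Z_mul_Z]
  rw [this, kronN_one]

/-- With `S_x := Σ σx^{(i)}`, `S_z := Σ σz^{(i)}` and the dephasing
Kraus operators `S_k`, one has
`Σ_{l,k} S_l ⟨l|S_x²|k⟩ S_k = N(1 - 4p(1-p)) I + 4p(1-p) S_z²`. -/
theorem kraus_sandwich_Sx_sq (N : ℕ) (hN : 1 ≤ N) (p : ℝ) (hp0 : 0 ≤ p) (hp1 : p ≤ 1) :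
    ∑ l : Fin N → Fin 2, ∑ k : Fin N → Fin 2,
      (((∑ i : Fin N, pauliAt N i.1 pauliX) * (∑ i : Fin N, pauliAt N i.1 pauliX)) l k) •
        (krausOp N p l * krausOp N p k) =
      (((N : ℝ) * (1 - 4 * p * (1 - p)) : ℝ) : ℂ) • (1 : Matrix (Fin N → Fin 2) (Fin N → Fin 2) ℂ) +
        ((4 * p * (1 - p) : ℝ) : ℂ) •
          ((∑ i : Fin N, pauliAt N i.1 pauliZ) * (∑ i : Fin N, pauliAt N i.1 pauliZ)) := by
  set d : ℂ := ((4 * p * (1 - p) : ℝ) : ℂ) with hd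
  have expand : (∑ i : Fin N, pauliAt N i.1 pauliX) * (∑ i : Fin N, pauliAt N i.1 pauliX)
      = ∑ i : Fin N, ∑ j : Fin N, pauliAt N i.1 pauliX * pauliAt N j.1 pauliX :=
    Fintype.sum_mul_sum (fun i : Fin N => pauliAt N i.1 pauliX) (fun j : Fin N => pauliAt N j.1 pauliX)
  have step1 : ∑ l : Fin N → Fin 2, ∑ k : Fin N → Fin 2,
      (((∑ i : Fin N, pauliAt N i.1 pauliX) * (∑ i : Fin N, pauliAt N i.1 pauliX)) l k) •
        (krausOp N p l * krausOp N p k)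
      = ∑ i : Fin N, ∑ j : Fin N, ∑ l : Fin N → Fin 2, ∑ k : Fin N → Fin 2,
          ((pauliAt N i.1 pauliX * pauliAt N j.1 pauliX) l k) • (krausOp N p l * krausOp N p k) := by
    simp only [expand, Matrix.sum_apply, Finset.sum_smul]
    set g : Fin N → Fin N → (Fin N → Fin 2) → (Fin N → Fin 2) →
        Matrix (Fin N → Fin 2) (Fin N → Fin 2) ℂ := fun i j l k =>
      ((pauliAt N i.1 pauliX * pauliAt N j.1 pauliX) l k) • (krausOp N p l * krausOp N p k) with hg
    calc ∑ l : Fin N → Fin 2, ∑ k : Fin N → Fin 2, ∑ i : Fin N, ∑ j : Fin N, g i j l k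
        = ∑ l : Fin N → Fin 2, ∑ i : Fin N, ∑ k : Fin N → Fin 2, ∑ j : Fin N, g i j l k :=
          Finset.sum_congr rfl fun l _ => Finset.sum_comm
      _ = ∑ i : Fin N, ∑ l : Fin N → Fin 2, ∑ k : Fin N → Fin 2, ∑ j : Fin N, g i j l k :=
          Finset.sum_comm
      _ = ∑ i : Fin N, ∑ l : Fin N → Fin 2, ∑ j : Fin N, ∑ k : Fin N → Fin 2, g i j l k :=
          Finset.sum_congr rfl fun i _ => Finset.sum_congr rfl fun l _ => Finset.sum_comm
      _ = ∑ i : Fin N, ∑ j : Fin N, ∑ l : Fin N → Fin 2, ∑ k : Fin N → Fin 2, g i j l k :=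
          Finset.sum_congr rfl fun i _ => Finset.sum_comm
  rw [step1]
  have step2 : ∀ i j : Fin N, (∑ l : Fin N → Fin 2, ∑ k : Fin N → Fin 2,
      ((pauliAt N i.1 pauliX * pauliAt N j.1 pauliX) l k) • (krausOp N p l * krausOp N p k))
      = d • (pauliAt N i.1 pauliZ * pauliAt N j.1 pauliZ) +
        (if i = j then ((1 - 4 * p * (1 - p) : ℝ) : ℂ) • (1 : Matrix (Fin N → Fin 2) (Fin N → Fin 2) ℂ) else 0) := by
    intro i j
    rw [key p hp0 hp1 i j]
    by_cases h : i = j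
    · subst h
      rw [if_pos rfl, if_pos rfl, ZZ_self, ← add_smul]
      rw [show (d + ((1 - 4 * p * (1 - p) : ℝ) : ℂ)) = 1 by rw [hd]; push_cast; ring, one_smul]
    · rw [if_neg h, if_neg h, add_zero]
  simp only [step2]
  rw [show (∑ i : Fin N, ∑ j : Fin N,
      (d • (pauliAt N i.1 pauliZ * pauliAt N j.1 pauliZ) +
        (if i = j then ((1 - 4 * p * (1 - p) : ℝ) : ℂ) • (1 : Matrix (Fin N → Fin 2) (Fin N → Fin 2) ℂ) else 0)))
      = (∑ i : Fin N, ∑ j : Fin N, d • (pauliAt N i.1 pauliZ * pauliAt N j.1 pauliZ)) +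
        (∑ i : Fin N, ∑ j : Fin N,
          (if i = j then ((1 - 4 * p * (1 - p) : ℝ) : ℂ) • (1 : Matrix (Fin N → Fin 2) (Fin N → Fin 2) ℂ) else 0))
    from by simp only [Finset.sum_add_distrib]]
  have hite : (∑ i : Fin N, ∑ j : Fin N,
      (if i = j then ((1 - 4 * p * (1 - p) : ℝ) : ℂ) • (1 : Matrix (Fin N → Fin 2) (Fin N → Fin 2) ℂ) else 0))
      = (((N : ℝ) * (1 - 4 * p * (1 - p)) : ℝ) : ℂ) • (1 : Matrix (Fin N → Fin 2) (Fin N → Fin 2) ℂ) := by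
    have h1 : ∀ i : Fin N, (∑ j : Fin N,
        (if i = j then ((1 - 4 * p * (1 - p) : ℝ) : ℂ) • (1 : Matrix (Fin N → Fin 2) (Fin N → Fin 2) ℂ) else 0))
        = ((1 - 4 * p * (1 - p) : ℝ) : ℂ) • (1 : Matrix (Fin N → Fin 2) (Fin N → Fin 2) ℂ) := by
      intro i
      rw [Finset.sum_ite_eq Finset.univ i
        (fun _ => ((1 - 4 * p * (1 - p) : ℝ) : ℂ) • (1 : Matrix (Fin N → Fin 2) (Fin N → Fin 2) ℂ))]
      simp
    simp only [h1, Finset.sum_const, Finset.card_univ, Fintype.card_fin, Fintype.card_fun]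
    rw [← Nat.cast_smul_eq_nsmul ℂ, smul_smul]
    congr 1
    push_cast
    ring
  rw [hite]
  rw [Fintype.sum_mul_sum (fun i : Fin N => pauliAt N i.1 pauliZ) (fun j : Fin N => pauliAt N j.1 pauliZ)]
  rw [Finset.smul_sum]
  simp only [Finset.smul_sum]
  rw [add_comm]
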